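/- arXiv:1504.05172 — 4 statements merged into one kernel-verified Lean document; each statement's English description precedes it below -/
import Mathlib

section
/- The inclusion of H into (F, d_Y) is not a quasi-isometric embedding: there do not exist λ > 0 and c ≥ 0 such that for all g ∈ H one has ℓ_{a,b}(g) ≤ λ·|g|_Y + c, where ℓ_{a,b}(g) denotes the least k such that g is a product of k elements of {a, b, a⁻¹, b⁻¹}. -/
open FreeGroup Filter

namespace PurelyLox

abbrev F : Type := FreeGroup (Fin 3)

def a : F := FreeGroup.of 0
def b : F := FreeGroup.of 1
def c : F := FreeGroup.of 2

/-- The subgroup generated by `a` and `b`. -/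
def H : Subgroup F := Subgroup.closure {a, b}

/-- `g` is a positive word in the generators `a` and `b`. -/
def PosAB (g : F) : Prop :=
  ∀ x ∈ g.toWord, x.2 = true ∧ x.1 ≠ 2

/-- A word is 7-aperiodic: it contains no subword `u^7` with `u` nonempty. -/
def Aperiodic7 {β : Type*} (w : List β) : Prop :=
  ¬ ∃ u : List β, u ≠ [] ∧ (List.flatten (List.replicate 7 u)) <:+: w

/-- The data of the fixed sequence `(v n)` of positive 7-aperiodic words in `a,b`,
with pairwise distinct lengths tending to infinity. -/
structure VSeq where
  v : ℕ → F
  pos : ∀ n, PosAB (v n)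
  len_ne : ∀ m n, m ≠ n → ((v m).toWord.length ≠ (v n).toWord.length)
  len_tendsto : Tendsto (fun n => (v n).toWord.length) atTop atTop
  aperiodic : ∀ n, Aperiodic7 (v n).toWord

/-- `w n = v n * c`. -/
def VSeq.w (V : VSeq) (n : ℕ) : F := V.v n * c

/-- `z` is a `W`-word: nontrivial, and its reduced word is a subword of
the reduced word of `(w n)^m` for some `n` and some `m ≠ 0`. -/
def VSeq.IsW (V : VSeq) (z : F) : Prop :=
  z ≠ 1 ∧ ∃ (n : ℕ) (m : ℤ), m ≠ 0 ∧ z.toWord <:+: ((V.w n) ^ m).toWord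

/-- `|g|_Y`: the least `k` such that `g` is a product of `k` `W`-words. -/
noncomputable def VSeq.normY (V : VSeq) (g : F) : ℕ :=
  sInf {k | ∃ l : List F, l.length = k ∧ (∀ z ∈ l, V.IsW z) ∧ l.prod = g}

/-- The vertex distance in the graph `Y`. -/
noncomputable def VSeq.dY (V : VSeq) (x y : F) : ℕ := V.normY (x⁻¹ * y)

/-- The product `u * v` is without cancellation. -/
def NoCancel (u v : F) : Prop := (u * v).toWord = u.toWord ++ v.toWord

/-- `p 0, p 1, …, p k` is a `d_Y`-geodesic from `x` to `y`. -/
def VSeq.IsGeodesic (V : VSeq) (x y : F) (k : ℕ) (p : ℕ → F) : Prop :=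
  p 0 = x ∧ p k = y ∧ (∀ i < k, V.dY (p i) (p (i + 1)) = 1) ∧ k = V.dY x y

/-- `g` is cyclically reduced. -/
def CyclicallyReduced (g : F) : Prop := (g * g).toWord = g.toWord ++ g.toWord

/-- `g` is root-free. -/
def RootFree (g : F) : Prop := ∀ (x : F) (s : ℤ), 2 ≤ |s| → g ≠ x ^ s


/-- The word length of `g` with respect to `{a, b, a⁻¹, b⁻¹}`. -/
noncomputable def lenAB (g : F) : ℕ :=
  sInf {k | ∃ l : List F, l.length = k ∧ (∀ z ∈ l, z = a ∨ z = b ∨ z = a⁻¹ ∨ z = b⁻¹) ∧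
    l.prod = g}

/-- A word all of whose letters are positive is reduced. -/
lemma reduce_of_pos {α : Type*} [DecidableEq α] (L : List (α × Bool))
    (h : ∀ x ∈ L, x.2 = true) : FreeGroup.reduce L = L := by
  induction L with
  | nil => rfl
  | cons x L ih =>
    have hL : FreeGroup.reduce L = L := ih fun y hy => h y (List.mem_cons_of_mem _ hy)
    rw [FreeGroup.reduce.cons, hL]
    cases L with
    | nil => rfl
    | cons hd tl =>
      simp only [List.casesOn]
      have hx : x.2 = true := h x (List.mem_cons_self)
      have hhd : hd.2 = true := h hd (by simp)
      have : ¬ (x.1 = hd.1 ∧ x.2 = !hd.2) := by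
        rintro ⟨-, h2⟩
        rw [hx, hhd] at h2
        simp at h2
      simp [this]

/-- A positive word in `a, b` lies in `H`. -/
lemma mk_mem_H (L : List (Fin 3 × Bool)) (h : ∀ x ∈ L, x.2 = true ∧ x.1 ≠ 2) :
    FreeGroup.mk L ∈ H := by
  induction L with
  | nil =>
    have : FreeGroup.mk ([] : List (Fin 3 × Bool)) = (1 : F) := rfl
    rw [this]; exact one_mem _
  | cons x L ih =>
    have hx := h x (List.mem_cons_self)
    have hxe : x = (x.1, true) := by
      rcases x with ⟨i, b⟩; simp; exact hx.1
    have h1 : FreeGroup.mk (x :: L) = FreeGroup.of x.1 * FreeGroup.mk L := by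
      rw [FreeGroup.of, FreeGroup.mul_mk]
      rw [hxe]; rfl
    rw [h1]
    refine mul_mem ?_ (ih fun y hy => h y (List.mem_cons_of_mem _ hy))
    have : x.1 = 0 ∨ x.1 = 1 := by
      have := hx.2
      omega
    rcases this with h0 | h0 <;> rw [h0]
    · exact Subgroup.subset_closure (by left; rfl)
    · exact Subgroup.subset_closure (by right; rfl)

/-- Positive words reconstruct as products of generators. -/
lemma prod_map_of (L : List (Fin 3 × Bool)) (h : ∀ x ∈ L, x.2 = true) :
    (L.map fun x => FreeGroup.of x.1).prod = FreeGroup.mk L := by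
  induction L with
  | nil => rfl
  | cons x L ih =>
    have hx := h x (List.mem_cons_self)
    have hxe : x = (x.1, true) := by rcases x with ⟨i, b⟩; simp; exact hx
    rw [List.map_cons, List.prod_cons, ih fun y hy => h y (List.mem_cons_of_mem _ hy)]
    rw [FreeGroup.of, FreeGroup.mul_mk]
    rw [hxe]; rfl

lemma norm_gen (z : F) (hz : z = a ∨ z = b ∨ z = a⁻¹ ∨ z = b⁻¹) :
    z.toWord.length ≤ 1 := by
  rcases hz with h | h | h | h <;> subst h <;>
    simp [a, b, FreeGroup.toWord_inv, FreeGroup.invRev_length]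

lemma length_le_of_prod (l : List F)
    (h : ∀ z ∈ l, z = a ∨ z = b ∨ z = a⁻¹ ∨ z = b⁻¹) :
    l.prod.toWord.length ≤ l.length := by
  induction l with
  | nil => simp
  | cons z l ih =>
    rw [List.prod_cons]
    calc (z * l.prod).toWord.length
        ≤ (z.toWord ++ l.prod.toWord).length :=
          (FreeGroup.toWord_mul_sublist z l.prod).length_le
      _ = z.toWord.length + l.prod.toWord.length := List.length_append
      _ ≤ 1 + l.length := by
          exact Nat.add_le_add (norm_gen z (h z (List.mem_cons_self)))
            (ih fun y hy => h y (List.mem_cons_of_mem _ hy))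
      _ = (z :: l).length := by simp [Nat.add_comm]

/-- The inclusion of `H` into `(F, d_Y)` is not a quasi-isometric embedding. -/
theorem stmt6 (V : VSeq) :
    ¬ ∃ lam c : ℝ, 0 < lam ∧ 0 ≤ c ∧
        ∀ g : F, g ∈ H → (lenAB g : ℝ) ≤ lam * (V.normY g : ℝ) + c := by
  rintro ⟨lam, C, hlam, hC, hqi⟩
  -- pick `n` with `|v n|` large
  set N : ℕ := ⌈lam + C⌉₊ + 1 with hN
  obtain ⟨n, hn⟩ := (V.len_tendsto.eventually_ge_atTop N).exists
  set g : F := V.v n with hg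
  have hpos : ∀ x ∈ g.toWord, x.2 = true ∧ x.1 ≠ 2 := V.pos n
  have hglen : N ≤ g.toWord.length := hn
  have hgne : g ≠ 1 := by
    intro h1
    rw [h1, FreeGroup.toWord_one] at hglen
    simp [hN] at hglen
  -- `g ∈ H`
  have hgH : g ∈ H := by
    have := mk_mem_H g.toWord hpos
    rwa [FreeGroup.mk_toWord] at this
  -- word length of `w n`
  have hcw : (V.w n).toWord = g.toWord ++ [((2 : Fin 3), true)] := by
    have hc : c = FreeGroup.mk [((2 : Fin 3), true)] := rfl
    have : V.w n = FreeGroup.mk (g.toWord ++ [((2 : Fin 3), true)]) := by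
      rw [VSeq.w, ← hg, hc, ← FreeGroup.mul_mk, FreeGroup.mk_toWord]
    rw [this, FreeGroup.toWord_mk, reduce_of_pos]
    intro x hx
    rcases List.mem_append.1 hx with h | h
    · exact (hpos x h).1
    · simp at h; rw [h]
  -- `normY g ≤ 1`
  have hW : V.IsW g := by
    refine ⟨hgne, n, 1, one_ne_zero, ?_⟩
    rw [zpow_one, hcw]
    exact (List.prefix_append _ _).isInfix
  have hY1 : V.normY g ≤ 1 := by
    apply Nat.sInf_le
    exact ⟨[g], rfl, fun z hz => by simp at hz; rw [hz]; exact hW, by simp⟩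
  -- `lenAB g ≥ |g|`
  have hlenAB : g.toWord.length ≤ lenAB g := by
    have hne : {k | ∃ l : List F, l.length = k ∧
        (∀ z ∈ l, z = a ∨ z = b ∨ z = a⁻¹ ∨ z = b⁻¹) ∧ l.prod = g}.Nonempty := by
      refine ⟨g.toWord.length, g.toWord.map (fun x => FreeGroup.of x.1), by simp, ?_, ?_⟩
      · intro z hz
        rcases List.mem_map.1 hz with ⟨x, hx, rfl⟩
        have := hpos x hx
        have : x.1 = 0 ∨ x.1 = 1 := by have := this.2; omega
        rcases this with h0 | h0 <;> rw [h0]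
        · left; rfl
        · right; left; rfl
      · rw [prod_map_of _ fun x hx => (hpos x hx).1, FreeGroup.mk_toWord]
    obtain ⟨l, hl, hlz, hlp⟩ := Nat.sInf_mem hne
    rw [lenAB, ← hl, ← hlp]
    exact length_le_of_prod l hlz
  -- contradiction
  have hle := hqi g hgH
  have h1 : (lenAB g : ℝ) ≤ lam + C := by
    calc (lenAB g : ℝ) ≤ lam * (V.normY g : ℝ) + C := hle
      _ ≤ lam * 1 + C := by
          gcongr
          exact_mod_cast hY1
      _ = lam + C := by ring
  have h2 : (lam + C) < N := by
    have : lam + C ≤ (⌈lam + C⌉₊ : ℝ) := Nat.le_ceil _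
    have hNN : ((⌈lam + C⌉₊ : ℝ)) < N := by
      rw [hN]; push_cast; linarith
    linarith
  have h3 : (N : ℝ) ≤ lenAB g := by
    have : N ≤ lenAB g := le_trans hglen hlenAB
    exact_mod_cast this
  linarith

end PurelyLox
end

section
/- There exists C ≥ 1 such that for all x, y ∈ F: every element of the set {x·u : u a prefix of the reduced word of x⁻¹y} (the vertex set of the geodesic from x to y in the Cayley graph of F with respect to {a,b,c}) is within d_Y-distance C of some point of every d_Y-geodesic from x to y, and conversely every point of every d_Y-geodesic from x to y is within d_Y-distance C of x·u for some prefix u of the reduced word of x⁻¹y. -/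
open FreeGroup Filter

namespace PurelyLox

/-- A word is reduced: no adjacent cancelling pair. -/
def Reduced (L : List (Fin 3 × Bool)) : Prop :=
  List.Chain' (fun p q => q ≠ (p.1, !p.2)) L

lemma exists_bad_of_not_chain' {α : Type*} (R : α → α → Prop) :
    ∀ (L : List α), ¬ List.Chain' R L →
      ∃ l₁ x y l₂, L = l₁ ++ x :: y :: l₂ ∧ ¬ R x y := by
  intro L
  induction L with
  | nil => intro h; exact absurd List.isChain_nil h
  | cons a L ih =>
    cases L with
    | nil => intro h; exact absurd (List.isChain_singleton a) h
    | cons b L' =>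
      intro h
      rw [List.Chain', List.isChain_cons_cons] at h
      by_cases hab : R a b
      · have : ¬ List.Chain' R (b :: L') := fun hc => h ⟨hab, hc⟩
        obtain ⟨l₁, x, y, l₂, hL, hR⟩ := ih this
        exact ⟨a :: l₁, x, y, l₂, by rw [hL]; rfl, hR⟩
      · exact ⟨[], a, b, L', rfl, hab⟩

lemma reduced_reduce (L : List (Fin 3 × Bool)) : Reduced (FreeGroup.reduce L) := by
  by_contra h
  obtain ⟨l₁, x, y, l₂, hL, hR⟩ := exists_bad_of_not_chain' _ _ h
  have hy : y = (x.1, !x.2) := not_not.mp hR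
  have : FreeGroup.reduce L = l₁ ++ (x.1, x.2) :: (x.1, !x.2) :: l₂ := by
    rw [hL, hy]
  exact FreeGroup.reduce.not this

lemma reduce_eq_self_of_reduced :
    ∀ {L : List (Fin 3 × Bool)}, Reduced L → FreeGroup.reduce L = L := by
  intro L
  induction L with
  | nil => intro _; rfl
  | cons x L ih =>
    intro h
    have htail : Reduced L := h.tail
    rw [FreeGroup.reduce.cons, ih htail]
    cases L with
    | nil => rfl
    | cons hd tl =>
      have hx : hd ≠ (x.1, !x.2) := (List.isChain_cons_cons.mp h).1
      have hcond : ¬ (x.1 = hd.1 ∧ x.2 = !hd.2) := by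
        rintro ⟨h1, h2⟩
        apply hx
        exact Prod.ext h1.symm (by simp [h2])
      simp only [hcond, if_false]

lemma toWord_mk_reduced {L : List (Fin 3 × Bool)} (h : Reduced L) :
    (FreeGroup.mk L).toWord = L := by
  rw [FreeGroup.toWord_mk, reduce_eq_self_of_reduced h]

lemma reduced_toWord (x : F) : Reduced x.toWord := by
  rw [← FreeGroup.reduce_toWord]; exact reduced_reduce _

lemma Reduced.infix {L L' : List (Fin 3 × Bool)} (h : Reduced L) (h' : L' <:+: L) :
    Reduced L' := List.IsChain.infix h h'

lemma invRev_append (l₁ l₂ : List (Fin 3 × Bool)) :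
    FreeGroup.invRev (l₁ ++ l₂) = FreeGroup.invRev l₂ ++ FreeGroup.invRev l₁ := by
  simp [FreeGroup.invRev]

lemma invRev_singleton (x : Fin 3 × Bool) :
    FreeGroup.invRev [x] = [(x.1, !x.2)] := by
  simp [FreeGroup.invRev]

lemma infix_invRev {l₁ l₂ : List (Fin 3 × Bool)} (h : l₁ <:+: l₂) :
    FreeGroup.invRev l₁ <:+: FreeGroup.invRev l₂ := by
  obtain ⟨s, t, rfl⟩ := h
  rw [invRev_append, invRev_append]
  exact ⟨FreeGroup.invRev t, FreeGroup.invRev s, by rw [List.append_assoc]⟩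

lemma prefix_append_split {α : Type*} {u A B : List α} (h : u <+: A ++ B) :
    u <+: A ∨ ∃ s, s <+: B ∧ u = A ++ s := by
  by_cases hl : u.length ≤ A.length
  · exact Or.inl (List.prefix_of_prefix_length_le h (List.prefix_append A B) hl)
  · right
    have hA : A <+: u := List.prefix_of_prefix_length_le (List.prefix_append A B) h (le_of_not_ge hl)
    obtain ⟨s, rfl⟩ := hA
    obtain ⟨r, hr⟩ := h
    rw [List.append_assoc] at hr
    have : s ++ r = B := List.append_cancel_left hr
    exact ⟨s, ⟨r, this⟩, rfl⟩

/-- Word-level cancellation lemma. -/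
lemma cancel_words :
    ∀ (n : ℕ) (A B : List (Fin 3 × Bool)), A.length ≤ n → Reduced A → Reduced B →
      ∃ A₁ T B₂, A = A₁ ++ T ∧ B = FreeGroup.invRev T ++ B₂ ∧ Reduced (A₁ ++ B₂) := by
  intro n
  induction n with
  | zero =>
    intro A B hA hrA hrB
    have : A = [] := List.eq_nil_of_length_eq_zero (Nat.le_zero.mp hA)
    subst this
    exact ⟨[], [], B, rfl, rfl, hrB⟩
  | succ n ih =>
    intro A B hA hrA hrB
    by_cases hred : Reduced (A ++ B)
    · exact ⟨A, [], B, by simp, by simp [FreeGroup.invRev], hred⟩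
    · rw [Reduced, List.Chain', List.isChain_append] at hred
      push_neg at hred
      obtain ⟨x, hx, y, hy, hxy⟩ := hred hrA hrB
      have hAne : A ≠ [] := by rintro rfl; simp at hx
      have hBne : B ≠ [] := by rintro rfl; simp at hy
      have hAeq : A = A.dropLast ++ [x] := by
        have h2 := List.dropLast_append_getLast hAne
        rw [List.getLast?_eq_getLast (l := A) hAne, Option.mem_some_iff] at hx
        rw [hx] at h2
        exact h2.symm
      have hBeq : B = y :: B.tail := (List.cons_head?_tail hy).symm
      have hlen : A.dropLast.length ≤ n := by
        have : 1 ≤ A.length := List.length_pos_iff.mpr hAne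
        rw [List.length_dropLast]; omega
      obtain ⟨A₁, T', B₂, h1, h2, h3⟩ := ih A.dropLast B.tail hlen
        (hrA.infix (List.dropLast_prefix A).isInfix)
        (hrB.infix (List.tail_suffix B).isInfix)
      refine ⟨A₁, T' ++ [x], B₂, ?_, ?_, h3⟩
      · rw [← List.append_assoc, ← h1, ← hAeq]
      · rw [invRev_append, invRev_singleton, ← hxy]
        rw [hBeq, h2]
        rfl

/-- Element-level cancellation lemma. -/
lemma cancel_elt (u v : F) :
    ∃ u₁ t v₂ : F, u = u₁ * t ∧ v = t⁻¹ * v₂ ∧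
      u.toWord = u₁.toWord ++ t.toWord ∧ v.toWord = (t⁻¹).toWord ++ v₂.toWord ∧
      (u * v).toWord = u₁.toWord ++ v₂.toWord := by
  obtain ⟨A₁, T, B₂, hA, hB, hred⟩ :=
    cancel_words u.toWord.length u.toWord v.toWord le_rfl (reduced_toWord u) (reduced_toWord v)
  have hrA : Reduced u.toWord := reduced_toWord u
  have hrB : Reduced v.toWord := reduced_toWord v
  have hA₁ : Reduced A₁ := hrA.infix (by rw [hA]; exact (List.prefix_append A₁ T).isInfix)
  have hT : Reduced T := hrA.infix (by rw [hA]; exact (List.suffix_append A₁ T).isInfix)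
  have hiT : Reduced (FreeGroup.invRev T) :=
    hrB.infix (by rw [hB]; exact (List.prefix_append _ B₂).isInfix)
  have hB₂ : Reduced B₂ := hrB.infix (by rw [hB]; exact (List.suffix_append _ B₂).isInfix)
  refine ⟨FreeGroup.mk A₁, FreeGroup.mk T, FreeGroup.mk B₂, ?_, ?_, ?_, ?_, ?_⟩
  · rw [FreeGroup.mul_mk, ← hA, FreeGroup.mk_toWord]
  · rw [FreeGroup.inv_mk, FreeGroup.mul_mk, ← hB, FreeGroup.mk_toWord]
  · rw [toWord_mk_reduced hA₁, toWord_mk_reduced hT, hA]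
  · rw [FreeGroup.inv_mk, toWord_mk_reduced hiT, toWord_mk_reduced hB₂, hB]
  · have hu : u = FreeGroup.mk u.toWord := FreeGroup.mk_toWord.symm
    have hv : v = FreeGroup.mk v.toWord := FreeGroup.mk_toWord.symm
    rw [toWord_mk_reduced hA₁, toWord_mk_reduced hB₂]
    have : u * v = FreeGroup.mk (A₁ ++ B₂) := by
      rw [hu, hv, hA, hB, FreeGroup.mul_mk]
      have : FreeGroup.mk ((A₁ ++ T) ++ (FreeGroup.invRev T ++ B₂)) =
          FreeGroup.mk A₁ * (FreeGroup.mk T * (FreeGroup.mk T)⁻¹) * FreeGroup.mk B₂ := by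
        rw [FreeGroup.inv_mk, FreeGroup.mul_mk, FreeGroup.mul_mk, FreeGroup.mul_mk]
        simp
      rw [this]
      rw [mul_inv_cancel, mul_one, FreeGroup.mul_mk]
    rw [this, toWord_mk_reduced hred]

variable {V : VSeq}

lemma isW_inv {z : F} (h : V.IsW z) : V.IsW z⁻¹ := by
  obtain ⟨hne, n, m, hm, hinf⟩ := h
  refine ⟨inv_ne_one.mpr hne, n, -m, neg_ne_zero.mpr hm, ?_⟩
  rw [FreeGroup.toWord_inv, zpow_neg, FreeGroup.toWord_inv]
  exact infix_invRev hinf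

lemma isW_of_infix {z g : F} (h : V.IsW z) (hinf : g.toWord <:+: z.toWord) :
    g = 1 ∨ V.IsW g := by
  by_cases hg : g = 1
  · exact Or.inl hg
  · obtain ⟨_, n, m, hm, hz⟩ := h
    exact Or.inr ⟨hg, n, m, hm, hinf.trans hz⟩

lemma w_toWord (n : ℕ) : (V.w n).toWord = (V.v n).toWord ++ [((2 : Fin 3), true)] := by
  have hred : Reduced ((V.v n).toWord ++ [((2 : Fin 3), true)]) := by
    rw [Reduced, List.Chain', List.isChain_append]
    refine ⟨reduced_toWord _, List.isChain_singleton _, ?_⟩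
    intro x hx y hy
    have hxm : x ∈ (V.v n).toWord := List.mem_of_mem_getLast? hx
    have := (V.pos n) x hxm
    have hy' : y = ((2 : Fin 3), true) := (by simpa using hy : ((2:Fin 3),true) = y).symm
    rw [hy']
    intro hcon
    rw [Prod.ext_iff] at hcon
    simp [this.1] at hcon
  have : V.w n = FreeGroup.mk ((V.v n).toWord ++ [((2 : Fin 3), true)]) := by
    rw [← FreeGroup.mul_mk, FreeGroup.mk_toWord]
    rfl
  rw [this, toWord_mk_reduced hred]


lemma flatten_replicate_singleton {β : Type*} : ∀ (m : ℕ) (x : β),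
    List.flatten (List.replicate m [x]) = List.replicate m x := by
  intro m x
  induction m with
  | zero => rfl
  | succ m ih => simp [List.replicate_succ, ih]

lemma mk_single_ne_one (x : Fin 3 × Bool) : FreeGroup.mk [x] ≠ (1 : F) := by
  intro h
  have := toWord_mk_reduced (L := [x]) (List.isChain_singleton x)
  rw [h, FreeGroup.toWord_one] at this
  exact List.cons_ne_nil x [] this.symm

lemma toWord_mk_single (x : Fin 3 × Bool) : (FreeGroup.mk [x]).toWord = [x] :=
  toWord_mk_reduced (List.isChain_singleton x)

lemma exists_mem_letter (i : Fin 3) (hi : i = 0 ∨ i = 1) :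
    ∃ n, ((i, true)) ∈ (V.v n).toWord := by
  obtain ⟨n, hn⟩ := (V.len_tendsto.eventually_ge_atTop 7).exists
  refine ⟨n, ?_⟩
  by_contra hmem
  set L := (V.v n).toWord with hL
  -- the "other" letter
  obtain ⟨j, hj⟩ : ∃ j : Fin 3, ∀ t : Fin 3, t ≠ 2 → t ≠ i → t = j := by
    rcases hi with rfl | rfl
    · exact ⟨1, by decide⟩
    · exact ⟨0, by decide⟩
  have hall : ∀ x ∈ L, x = ((j, true) : Fin 3 × Bool) := by
    intro x hx
    have hp := V.pos n x hx
    have hxi : x.1 ≠ i := by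
      intro hc
      apply hmem
      have : x = (i, true) := Prod.ext hc hp.1
      rwa [← this]
    have := hj x.1 hp.2 hxi
    exact Prod.ext this hp.1
  have hrep : L = List.replicate L.length ((j, true) : Fin 3 × Bool) :=
    List.eq_replicate_of_mem hall
  apply V.aperiodic n
  refine ⟨[((j, true) : Fin 3 × Bool)], List.cons_ne_nil _ _, ?_⟩
  rw [flatten_replicate_singleton]
  have : List.replicate L.length ((j, true) : Fin 3 × Bool) =
      List.replicate 7 ((j, true) : Fin 3 × Bool) ++
        List.replicate (L.length - 7) ((j, true) : Fin 3 × Bool) := by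
    rw [← List.replicate_add]
    congr 1
    omega
  rw [← hL, hrep, this]
  exact (List.prefix_append _ _).isInfix

lemma isW_true_letter (i : Fin 3) : V.IsW (FreeGroup.mk [(i, true)]) := by
  have h2 : ∀ n : ℕ, ((i, true)) ∈ (V.v n).toWord → V.IsW (FreeGroup.mk [(i, true)]) := by
    intro n hmem
    refine ⟨mk_single_ne_one _, n, 1, one_ne_zero, ?_⟩
    rw [zpow_one, toWord_mk_single, w_toWord]
    obtain ⟨s, t, hst⟩ := List.append_of_mem hmem
    exact ⟨s, t ++ [((2 : Fin 3), true)], by rw [hst]; simp⟩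
  by_cases hi : i = 2
  · subst hi
    refine ⟨mk_single_ne_one _, 0, 1, one_ne_zero, ?_⟩
    rw [zpow_one, toWord_mk_single, w_toWord]
    exact ⟨(V.v 0).toWord, [], by simp⟩
  · have : i = 0 ∨ i = 1 := by
      have := i.2
      rcases i with ⟨iv, hiv⟩
      interval_cases iv
      · exact Or.inl rfl
      · exact Or.inr rfl
      · exact absurd rfl hi
    obtain ⟨n, hn⟩ := exists_mem_letter (V := V) i this
    exact h2 n hn

lemma isW_single (x : Fin 3 × Bool) : V.IsW (FreeGroup.mk [x]) := by
  rcases x with ⟨i, bb⟩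
  cases bb
  · have : (FreeGroup.mk [((i : Fin 3), false)] : F) = (FreeGroup.mk [(i, true)])⁻¹ := by
      rw [FreeGroup.inv_mk, invRev_singleton]
      norm_num
    rw [this]
    exact isW_inv (isW_true_letter i)
  · exact isW_true_letter i

lemma prod_map_mk_single : ∀ L : List (Fin 3 × Bool),
    (L.map fun x => (FreeGroup.mk [x] : F)).prod = FreeGroup.mk L := by
  intro L
  induction L with
  | nil => simp [FreeGroup.one_eq_mk]
  | cons x L ih => simp [List.prod_cons, ih, FreeGroup.mul_mk]

lemma repSet_nonempty (g : F) :
    {k | ∃ l : List F, l.length = k ∧ (∀ z ∈ l, V.IsW z) ∧ l.prod = g}.Nonempty := by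
  refine ⟨(g.toWord.map fun x => (FreeGroup.mk [x] : F)).length,
    g.toWord.map fun x => (FreeGroup.mk [x] : F), rfl, ?_, ?_⟩
  · intro z hz
    obtain ⟨x, _, rfl⟩ := List.mem_map.mp hz
    exact isW_single x
  · rw [prod_map_mk_single, FreeGroup.mk_toWord]

lemma normY_spec (g : F) : ∃ l : List F,
    l.length = V.normY g ∧ (∀ z ∈ l, V.IsW z) ∧ l.prod = g :=
  Nat.sInf_mem (repSet_nonempty (V := V) g)

lemma normY_le {g : F} {k : ℕ}
    (h : ∃ l : List F, l.length = k ∧ (∀ z ∈ l, V.IsW z) ∧ l.prod = g) :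
    V.normY g ≤ k :=
  Nat.sInf_le h

lemma normY_one : V.normY 1 = 0 :=
  Nat.le_zero.mp (normY_le ⟨[], rfl, by simp, rfl⟩)

lemma normY_mul_le (g h : F) : V.normY (g * h) ≤ V.normY g + V.normY h := by
  obtain ⟨l₁, hl₁, hw₁, hp₁⟩ := normY_spec (V := V) g
  obtain ⟨l₂, hl₂, hw₂, hp₂⟩ := normY_spec (V := V) h
  refine normY_le ⟨l₁ ++ l₂, ?_, ?_, ?_⟩
  · rw [List.length_append, hl₁, hl₂]
  · intro z hz
    rcases List.mem_append.mp hz with h | h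
    · exact hw₁ z h
    · exact hw₂ z h
  · rw [List.prod_append, hp₁, hp₂]

lemma normY_inv_le (g : F) : V.normY g⁻¹ ≤ V.normY g := by
  obtain ⟨l, hl, hw, hp⟩ := normY_spec (V := V) g
  refine normY_le ⟨(l.map fun x => x⁻¹).reverse, by simp [hl], ?_, ?_⟩
  · intro z hz
    rw [List.mem_reverse, List.mem_map] at hz
    obtain ⟨w, hwl, rfl⟩ := hz
    exact isW_inv (hw w hwl)
  · rw [← List.prod_inv_reverse, hp]

lemma normY_inv (g : F) : V.normY g⁻¹ = V.normY g :=
  le_antisymm (normY_inv_le g) (by simpa using normY_inv_le (V := V) g⁻¹)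

lemma normY_le_one {g : F} (h : g = 1 ∨ V.IsW g) : V.normY g ≤ 1 := by
  rcases h with rfl | h
  · rw [normY_one]; omega
  · exact normY_le ⟨[g], rfl, by simpa using h, List.prod_singleton⟩

lemma dY_triangle (x y z : F) : V.dY x z ≤ V.dY x y + V.dY y z := by
  have h : x⁻¹ * z = (x⁻¹ * y) * (y⁻¹ * z) := by group
  unfold VSeq.dY
  rw [h]
  exact normY_mul_le _ _

lemma dY_comm (x y : F) : V.dY x y = V.dY y x := by
  unfold VSeq.dY
  rw [← normY_inv]
  congr 1
  group

lemma dY_self (x : F) : V.dY x x = 0 := by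
  unfold VSeq.dY
  rw [inv_mul_cancel]
  exact normY_one


/-- Key Lemma: every prefix of the reduced word of a product of `W`-words is
within `dY`-distance 2 of a partial product. -/
lemma key (zs : List F) (hzs : ∀ z ∈ zs, V.IsW z) :
    ∀ u : List (Fin 3 × Bool), u <+: zs.prod.toWord →
      ∃ m ≤ zs.length, V.normY ((FreeGroup.mk u)⁻¹ * (zs.take m).prod) ≤ 2 := by
  induction zs using List.reverseRecOn with
  | nil =>
    intro u hu
    rw [List.prod_nil, FreeGroup.toWord_one, List.prefix_nil] at hu
    subst hu
    refine ⟨0, le_rfl, ?_⟩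
    have : (FreeGroup.mk [] : F) = 1 := FreeGroup.one_eq_mk.symm
    rw [this]
    simp only [List.take_nil, List.prod_nil, inv_one, one_mul]
    rw [normY_one]
    omega
  | append_singleton zs₀ z ih =>
    intro u hu
    have hz : V.IsW z := hzs z (List.mem_append_right _ (List.mem_singleton_self z))
    have hzs₀ : ∀ w ∈ zs₀, V.IsW w := fun w hw => hzs w (List.mem_append_left _ hw)
    have hprod : (zs₀ ++ [z]).prod = zs₀.prod * z := by simp
    obtain ⟨u₁, t, v₂, hP, hzz, hPw, hzw, hmul⟩ := cancel_elt zs₀.prod z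
    rw [hprod, hmul] at hu
    rcases prefix_append_split hu with h | ⟨s, hs, rfl⟩
    · have hu' : u <+: zs₀.prod.toWord := by
        rw [hPw]
        exact h.trans (List.prefix_append _ _)
      obtain ⟨m, hm, hle⟩ := ih hzs₀ u hu'
      refine ⟨m, by simp; omega, ?_⟩
      rwa [List.take_append_of_le_length hm]
    · refine ⟨(zs₀ ++ [z]).length, le_rfl, ?_⟩
      rw [List.take_length, hprod]
      have hmk : (FreeGroup.mk (u₁.toWord ++ s) : F) = u₁ * FreeGroup.mk s := by
        rw [← FreeGroup.mul_mk, FreeGroup.mk_toWord]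
      have heq : (FreeGroup.mk (u₁.toWord ++ s))⁻¹ * (zs₀.prod * z) =
          (FreeGroup.mk s)⁻¹ * v₂ := by
        rw [hmk, hP, hzz]
        group
      rw [heq]
      -- s is an infix of z's word
      have hsz : s <:+: z.toWord := by
        rw [hzw]
        exact hs.isInfix.trans (List.suffix_append _ _).isInfix
      have hsred : Reduced s := (reduced_toWord z).infix hsz
      have hmks : (FreeGroup.mk s : F).toWord = s := toWord_mk_reduced hsred
      have h1 : V.normY (FreeGroup.mk s)⁻¹ ≤ 1 := by
        rw [normY_inv]
        exact normY_le_one (isW_of_infix hz (by rw [hmks]; exact hsz))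
      have h2 : V.normY v₂ ≤ 1 := by
        refine normY_le_one (isW_of_infix hz ?_)
        rw [hzw]
        exact (List.suffix_append _ _).isInfix
      calc V.normY ((FreeGroup.mk s)⁻¹ * v₂) ≤ _ := normY_mul_le _ _
        _ ≤ 2 := by omega

section Geodesic

variable {x y : F} {k : ℕ} {p : ℕ → F}

/-- The list of `W`-letters along a geodesic between indices `i` and `i + d`. -/
def gList (p : ℕ → F) (i d : ℕ) : List F :=
  (List.range d).map fun s => (p (i + s))⁻¹ * p (i + s + 1)

lemma gList_length (i d : ℕ) : (gList p i d).length = d := by simp [gList]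

lemma gList_prod (i : ℕ) : ∀ d : ℕ, (gList p i d).prod = (p i)⁻¹ * p (i + d) := by
  intro d
  induction d with
  | zero => simp [gList]
  | succ d ih =>
    rw [gList, List.range_succ, List.map_append, List.prod_append, ← gList, ih]
    simp only [List.map_cons, List.map_nil, List.prod_cons, List.prod_nil, mul_one]
    rw [← mul_assoc, ← add_assoc]
    group

lemma gList_take (i d m : ℕ) (hm : m ≤ d) : (gList p i d).take m = gList p i m := by
  rw [gList, gList, ← List.map_take, List.take_range, Nat.min_eq_left hm]

lemma gList_isW (hgeo : V.IsGeodesic x y k p) (i d : ℕ) (hid : i + d ≤ k) :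
    ∀ z ∈ gList p i d, V.IsW z := by
  intro z hzm
  rw [gList, List.mem_map] at hzm
  obtain ⟨s, hs, rfl⟩ := hzm
  rw [List.mem_range] at hs
  have h1 : V.dY (p (i + s)) (p (i + s + 1)) = 1 := hgeo.2.2.1 (i + s) (by omega)
  obtain ⟨l, hl, hw, hp⟩ := normY_spec (V := V) ((p (i + s))⁻¹ * p (i + s + 1))
  rw [VSeq.dY] at h1
  rw [h1] at hl
  obtain ⟨w, rfl⟩ := List.length_eq_one_iff.mp hl
  rw [List.prod_singleton] at hp
  rw [← hp]
  exact hw w (List.mem_singleton_self w)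

lemma dY_points_le (hgeo : V.IsGeodesic x y k p) (i j : ℕ) (hij : i ≤ j) (hjk : j ≤ k) :
    V.dY (p i) (p j) ≤ j - i := by
  refine normY_le ⟨gList p i (j - i), gList_length _ _, gList_isW hgeo i (j - i) (by omega), ?_⟩
  rw [gList_prod]
  congr 2
  omega

lemma dY_start_le (hgeo : V.IsGeodesic x y k p) (j : ℕ) (hjk : j ≤ k) :
    V.dY x (p j) ≤ j := by
  have := dY_points_le hgeo 0 j (by omega) hjk
  rwa [hgeo.1, Nat.sub_zero] at this

lemma dY_start_ge (hgeo : V.IsGeodesic x y k p) (j : ℕ) (hjk : j ≤ k) :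
    j ≤ V.dY x (p j) := by
  have hk : k = V.dY x y := hgeo.2.2.2
  have h1 : V.dY x y ≤ V.dY x (p j) + V.dY (p j) y := dY_triangle _ _ _
  have h2 : V.dY (p j) y ≤ k - j := by
    have := dY_points_le hgeo j k hjk le_rfl
    rwa [hgeo.2.1] at this
  omega

end Geodesic

/-- Geodesics of `X` (the Cayley graph of `F` w.r.t. `{a,b,c}`) are
uniformly Hausdorff close, in `d_Y`, to `d_Y`-geodesics with the same endpoints. -/
theorem stmt8 (V : VSeq) :
    ∃ C : ℝ, 1 ≤ C ∧
      ∀ x y : F, ∀ (k : ℕ) (p : ℕ → F), V.IsGeodesic x y k p →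
        (∀ u : List (Fin 3 × Bool), u <+: (x⁻¹ * y).toWord →
          ∃ i ≤ k, (V.dY (x * FreeGroup.mk u) (p i) : ℝ) ≤ C) ∧
        (∀ i ≤ k, ∃ u : List (Fin 3 × Bool), u <+: (x⁻¹ * y).toWord ∧
          (V.dY (p i) (x * FreeGroup.mk u) : ℝ) ≤ C) := by
  refine ⟨6, by norm_num, ?_⟩
  intro x y k p hgeo
  have hx0 : p 0 = x := hgeo.1
  have hyk : p k = y := hgeo.2.1
  constructor
  · -- every point on the X-geodesic is close to the dY-geodesic
    intro u hu
    have hprod : (gList p 0 k).prod = x⁻¹ * y := by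
      rw [gList_prod, hx0, Nat.zero_add, hyk]
    obtain ⟨m, hm, hle⟩ := key (gList p 0 k) (gList_isW hgeo 0 k (by omega)) u
      (by rw [hprod]; exact hu)
    rw [gList_length] at hm
    rw [gList_take _ _ _ hm, gList_prod, hx0, Nat.zero_add] at hle
    refine ⟨m, hm, ?_⟩
    have hd : V.dY (x * FreeGroup.mk u) (p m) ≤ 2 := by
      rw [VSeq.dY]
      have heq : (x * FreeGroup.mk u)⁻¹ * p m = (FreeGroup.mk u)⁻¹ * (x⁻¹ * p m) := by group
      rw [heq]
      exact hle
    have : (V.dY (x * FreeGroup.mk u) (p m) : ℝ) ≤ 2 := by exact_mod_cast hd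
    linarith
  · -- every point on the dY-geodesic is close to the X-geodesic
    intro i hik
    obtain ⟨g₁, t, h₂, hg, hh, hgw, hhw, hmulw⟩ := cancel_elt (x⁻¹ * p i) ((p i)⁻¹ * y)
    have hxy : (x⁻¹ * p i) * ((p i)⁻¹ * y) = x⁻¹ * y := by group
    rw [hxy] at hmulw
    refine ⟨g₁.toWord, by rw [hmulw]; exact List.prefix_append _ _, ?_⟩
    rw [FreeGroup.mk_toWord]
    -- Claim A : x * g₁ is within 2 of some p j', j' ≤ i
    have hprodA : (gList p 0 i).prod = x⁻¹ * p i := by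
      rw [gList_prod, hx0, Nat.zero_add]
    obtain ⟨j', hj'i, hleA⟩ := key (gList p 0 i) (gList_isW hgeo 0 i (by omega)) g₁.toWord
      (by rw [hprodA, hgw]; exact List.prefix_append _ _)
    rw [gList_length] at hj'i
    rw [gList_take _ _ _ hj'i, gList_prod, hx0, Nat.zero_add, FreeGroup.mk_toWord] at hleA
    have hA : V.dY (x * g₁) (p j') ≤ 2 := by
      rw [VSeq.dY]
      have heq : (x * g₁)⁻¹ * p j' = g₁⁻¹ * (x⁻¹ * p j') := by group
      rw [heq]
      exact hleA
    -- Claim B : x * g₁ is within 2 of some p j, i ≤ j ≤ k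
    have hprodB : (gList p i (k - i)).prod = (p i)⁻¹ * y := by
      rw [gList_prod]
      have : i + (k - i) = k := by omega
      rw [this, hyk]
    obtain ⟨m, hm, hleB⟩ := key (gList p i (k - i))
      (gList_isW hgeo i (k - i) (by omega)) (t⁻¹).toWord
      (by rw [hprodB, hhw]; exact List.prefix_append _ _)
    rw [gList_length] at hm
    rw [gList_take _ _ _ hm, gList_prod, FreeGroup.mk_toWord] at hleB
    set j := i + m with hj
    have hxg₁ : x * g₁ = p i * t⁻¹ := by
      have : g₁ = (x⁻¹ * p i) * t⁻¹ := by rw [hg]; group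
      rw [this]; group
    have hB : V.dY (x * g₁) (p j) ≤ 2 := by
      rw [VSeq.dY, hxg₁]
      have heq : (p i * t⁻¹)⁻¹ * p j = (t⁻¹)⁻¹ * ((p i)⁻¹ * p j) := by group
      rw [heq]
      exact hleB
    have hjk : j ≤ k := by omega
    have hij : i ≤ j := by omega
    -- combine
    have h1 : j ≤ V.dY x (p j) := dY_start_ge hgeo j hjk
    have h2 : V.dY x (p j) ≤ V.dY x (p j') + V.dY (p j') (x * g₁) + V.dY (x * g₁) (p j) := by
      have t1 : V.dY x (p j) ≤ V.dY x (x * g₁) + V.dY (x * g₁) (p j) := dY_triangle _ _ _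
      have t2 : V.dY x (x * g₁) ≤ V.dY x (p j') + V.dY (p j') (x * g₁) := dY_triangle _ _ _
      omega
    have h3 : V.dY (p j') (x * g₁) ≤ 2 := by rw [dY_comm]; exact hA
    have h4 : V.dY x (p j') ≤ j' := dY_start_le hgeo j' (by omega)
    have hji : j ≤ i + 4 := by omega
    have h5 : V.dY (p i) (p j) ≤ j - i := dY_points_le hgeo i j hij hjk
    have h6 : V.dY (p i) (x * g₁) ≤ V.dY (p i) (p j) + V.dY (p j) (x * g₁) := dY_triangle _ _ _
    have h7 : V.dY (p j) (x * g₁) ≤ 2 := by rw [dY_comm]; exact hB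
    have hfin : V.dY (p i) (x * g₁) ≤ 6 := by omega
    exact_mod_cast hfin

end PurelyLox
end

section
/- Let z be a nontrivial element of H. Then z is a W-word if and only if there exists n ≥ 1 such that the reduced word of z is a subword of v_n or of v_n⁻¹. -/
open FreeGroup Filter

namespace PurelyLox

lemma reduce_of_allTrue {α : Type*} [DecidableEq α] :
    ∀ {L : List (α × Bool)}, (∀ x ∈ L, x.2 = true) → FreeGroup.reduce L = L := by
  intro L h
  induction L with
  | nil => rfl
  | cons hd tl ih =>
    rw [FreeGroup.reduce.cons, ih (fun x hx => h x (List.mem_cons_of_mem _ hx))]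
    cases tl with
    | nil => rfl
    | cons hd2 tl2 =>
      have h1 := h hd (by simp)
      have h2 := h hd2 (by simp)
      simp [h1, h2]

lemma invRev_infix {α : Type*} {L M : List (α × Bool)} (h : L <:+: M) :
    FreeGroup.invRev L <:+: FreeGroup.invRev M := by
  unfold FreeGroup.invRev
  exact List.reverse_infix.mpr (h.map _)

lemma mem_H_fst_ne (z : F) (hz : z ∈ H) : ∀ x ∈ z.toWord, x.1 ≠ 2 := by
  induction hz using Subgroup.closure_induction with
  | mem x hx =>
    rcases hx with rfl | rfl <;>
      · intro y hy
        simp only [a, b, FreeGroup.toWord_of, List.mem_singleton] at hy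
        subst hy; decide
  | one => intro y hy; simp [FreeGroup.toWord_one] at hy
  | mul x y _ _ ihx ihy =>
    intro t ht
    have hsub := (FreeGroup.toWord_mul_sublist x y).subset ht
    rcases List.mem_append.mp hsub with h | h
    · exact ihx t h
    · exact ihy t h
  | inv x _ ihx =>
    intro t ht
    rw [FreeGroup.toWord_inv] at ht
    simp only [FreeGroup.invRev, List.mem_reverse, List.mem_map] at ht
    obtain ⟨s, hs, rfl⟩ := ht
    exact ihx s hs

lemma prefix_of_not_mem {α : Type*} {x : α} :
    ∀ {L A B : List α}, x ∉ L → L <+: A ++ x :: B → L <+: A := by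
  intro L
  induction L with
  | nil => intro A B _ _; exact List.nil_prefix
  | cons y L' ih =>
    intro A B hx h
    cases A with
    | nil =>
      rw [List.nil_append, List.cons_prefix_cons] at h
      obtain ⟨rfl, -⟩ := h
      exact absurd List.mem_cons_self hx
    | cons a A' =>
      rw [List.cons_append, List.cons_prefix_cons] at h
      obtain ⟨rfl, h2⟩ := h
      exact (List.cons_prefix_cons).mpr
        ⟨rfl, ih (fun hm => hx (List.mem_cons_of_mem _ hm)) h2⟩

lemma infix_of_not_mem {α : Type*} {x : α} :
    ∀ {A L B : List α}, x ∉ L → L <:+: A ++ x :: B → L <:+: A ∨ L <:+: B := by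
  intro A
  induction A with
  | nil =>
    intro L B hx h
    obtain ⟨s, t, hst⟩ := h
    rw [List.nil_append] at hst
    right
    cases s with
    | nil =>
      rw [List.nil_append] at hst
      cases L with
      | nil => exact List.nil_infix
      | cons y L' =>
        rw [List.cons_append] at hst
        injection hst with h1 h2
        exact absurd (h1 ▸ (List.mem_cons_self : y ∈ y :: L')) hx
    | cons a s' =>
      rw [List.cons_append, List.cons_append] at hst
      injection hst with h1 h2
      exact ⟨s', t, h2⟩
  | cons a A' ih =>
    intro L B hx h
    obtain ⟨s, t, hst⟩ := h
    cases s with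
    | nil =>
      rw [List.nil_append] at hst
      have hp : L <+: (a :: A') ++ x :: B := ⟨t, by simpa using hst⟩
      exact Or.inl (prefix_of_not_mem hx hp).isInfix
    | cons a' s' =>
      rw [List.cons_append, List.cons_append, List.cons_append] at hst
      injection hst with h1 h2
      rcases ih hx ⟨s', t, h2⟩ with h1 | h1
      · exact Or.inl (List.infix_cons h1)
      · exact Or.inr h1

lemma infix_flatten {v L : List (Fin 3 × Bool)}
    (hL : L ≠ []) (hx : ((2 : Fin 3), true) ∉ L) :
    ∀ m : ℕ, L <:+: List.flatten (List.replicate m (v ++ [((2 : Fin 3), true)])) →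
      L <:+: v := by
  intro m
  induction m with
  | zero =>
    intro h
    simp only [List.replicate_zero, List.flatten_nil] at h
    exact absurd (List.infix_nil.mp h) hL
  | succ k ih =>
    intro h
    rw [List.replicate_succ, List.flatten_cons, List.append_assoc,
      List.singleton_append] at h
    rcases infix_of_not_mem hx h with h1 | h1
    · exact h1
    · exact ih h1

lemma w_eq_mk (V : VSeq) (n : ℕ) :
    V.w n = FreeGroup.mk ((V.v n).toWord ++ [((2 : Fin 3), true)]) := by
  rw [VSeq.w, ← FreeGroup.mul_mk]
  congr 1
  exact FreeGroup.mk_toWord.symm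

lemma wpow_toWord (V : VSeq) (n : ℕ) (k : ℕ) :
    ((V.w n) ^ k).toWord =
      List.flatten (List.replicate k ((V.v n).toWord ++ [((2 : Fin 3), true)])) := by
  rw [w_eq_mk, FreeGroup.pow_mk, FreeGroup.toWord_mk, reduce_of_allTrue]
  intro x hx
  rw [List.mem_flatten] at hx
  obtain ⟨l, hl, hxl⟩ := hx
  rw [List.eq_of_mem_replicate hl] at hxl
  rcases List.mem_append.mp hxl with h | h
  · exact ((V.pos n) x h).1
  · simp only [List.mem_singleton] at h; subst h; rfl

/-- A nontrivial `z ∈ H` is a `W`-word iff its reduced word is a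
subword of `v n` or of `(v n)⁻¹` for some `n`. -/
theorem stmt10 (V : VSeq) :
    ∀ z : F, z ∈ H → z ≠ 1 →
      (V.IsW z ↔ ∃ n : ℕ, z.toWord <:+: (V.v n).toWord ∨ z.toWord <:+: ((V.v n)⁻¹).toWord) := by
  intro z hzH hz1
  have hno2 : ∀ x ∈ z.toWord, x.1 ≠ 2 := mem_H_fst_ne z hzH
  have hnm : ((2 : Fin 3), true) ∉ z.toWord := fun h => hno2 _ h rfl
  have hLne : z.toWord ≠ [] := fun h => hz1 (FreeGroup.toWord_eq_nil_iff.mp h)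
  constructor
  · rintro ⟨-, n, m, hm, hinf⟩
    refine ⟨n, ?_⟩
    rcases lt_trichotomy m 0 with hneg | rfl | hpos
    · right
      have hk : (V.w n) ^ m = ((V.w n) ^ (-m).toNat)⁻¹ := by
        rw [← zpow_natCast, Int.toNat_of_nonneg (by omega), zpow_neg, inv_inv]
      rw [hk, FreeGroup.toWord_inv, wpow_toWord] at hinf
      have h2 := invRev_infix hinf
      rw [FreeGroup.invRev_invRev, ← FreeGroup.toWord_inv] at h2
      have hz1' : z⁻¹ ≠ 1 := by simpa using hz1
      have hLne' : (z⁻¹).toWord ≠ [] := fun h => hz1' (FreeGroup.toWord_eq_nil_iff.mp h)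
      have hno2' : ∀ x ∈ (z⁻¹).toWord, x.1 ≠ 2 := mem_H_fst_ne z⁻¹ (inv_mem hzH)
      have hnm' : ((2 : Fin 3), true) ∉ (z⁻¹).toWord := fun h => hno2' _ h rfl
      have h3 := infix_flatten hLne' hnm' _ h2
      have h4 := invRev_infix h3
      rwa [← FreeGroup.toWord_inv, ← FreeGroup.toWord_inv, inv_inv] at h4
    · exact absurd rfl hm
    · left
      have hk : (V.w n) ^ m = (V.w n) ^ m.toNat := by
        rw [← zpow_natCast, Int.toNat_of_nonneg hpos.le]
      rw [hk, wpow_toWord] at hinf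
      exact infix_flatten hLne hnm _ hinf
  · rintro ⟨n, h | h⟩
    · refine ⟨hz1, n, 1, one_ne_zero, ?_⟩
      have h1 : (V.w n) ^ (1 : ℤ) = (V.w n) ^ (1 : ℕ) := by norm_num
      rw [h1, wpow_toWord]
      simp only [List.replicate_one, List.flatten_cons, List.flatten_nil, List.append_nil]
      exact h.trans (List.prefix_append _ _).isInfix
    · refine ⟨hz1, n, -1, by norm_num, ?_⟩
      have h1 : (V.w n) ^ (-1 : ℤ) = ((V.w n) ^ (1 : ℕ))⁻¹ := by
        rw [zpow_neg, zpow_one, pow_one]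
      rw [h1, FreeGroup.toWord_inv, wpow_toWord]
      simp only [List.replicate_one, List.flatten_cons, List.flatten_nil, List.append_nil]
      have h2 : FreeGroup.invRev ((V.v n).toWord ++ [((2 : Fin 3), true)]) =
          FreeGroup.invRev [((2 : Fin 3), true)] ++ FreeGroup.invRev (V.v n).toWord := by
        simp [FreeGroup.invRev]
      rw [h2]
      rw [FreeGroup.toWord_inv] at h
      exact h.trans (List.suffix_append _ _).isInfix


end PurelyLox
end

section
/- Let w ∈ F be nontrivial and cyclically reduced, let u ∈ F, and let n ≥ 1 be such that the product g := u·w^n·u⁻¹ is without cancellation. Suppose g = z_1⋯z_k without cancellation, where each z_i is nontrivial and the reduced word of each z_i is 7-aperiodic (contains no subword of the form u₀^7 with u₀ a nonempty word). Then k ≥ ⌊n/7⌋. -/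
namespace PurelyLoxGen

/-- A word is 7-aperiodic: it contains no subword `u₀^7` with `u₀` nonempty. -/
def Aperiodic7 {β : Type*} (w : List β) : Prop :=
  ¬ ∃ u₀ : List β, u₀ ≠ [] ∧ (List.flatten (List.replicate 7 u₀)) <:+: w

/-- An element of a free group is cyclically reduced. -/
def CyclicallyReduced {α : Type*} [DecidableEq α] (g : FreeGroup α) : Prop :=
  (g * g).toWord = g.toWord ++ g.toWord

section Reduced

variable {α : Type*} [DecidableEq α]

/-- non-cancelling adjacency -/
def NC (a b : α × Bool) : Prop := ¬(a.1 = b.1 ∧ a.2 = !b.2)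

lemma reduce_len_le (L : List (α × Bool)) :
    (FreeGroup.reduce L).length ≤ L.length :=
  (FreeGroup.Red.sublist FreeGroup.reduce.red).length_le

lemma chain'_of_reduce : ∀ {L : List (α × Bool)}, FreeGroup.reduce L = L → List.Chain' NC L := by
  intro L
  induction L with
  | nil => intro; exact List.isChain_nil
  | cons x L ih =>
    intro h
    rw [FreeGroup.reduce.cons] at h
    rcases hr : FreeGroup.reduce L with _ | ⟨hd, tl⟩
    · rw [hr] at h
      simp only at h
      have : L = [] := by injection h with _ h2; exact h2.symm
      subst this; exact List.isChain_singleton x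
    · rw [hr] at h
      simp only at h
      split_ifs at h with hc
      · exfalso
        have h1 := reduce_len_le L
        rw [hr] at h1
        have h2 := congrArg List.length h
        simp at h1 h2
        omega
      · have hL : L = hd :: tl := by injection h with _ h2; exact h2.symm
        have hred : FreeGroup.reduce L = L := by rw [hr, hL]
        have := ih hred
        rw [hL] at this ⊢
        exact List.isChain_cons_cons.mpr ⟨hc, this⟩

lemma reduce_of_chain' : ∀ {L : List (α × Bool)}, List.Chain' NC L → FreeGroup.reduce L = L := by
  intro L
  induction L with
  | nil => intro; rfl
  | cons x L ih =>
    intro h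
    rcases L with _ | ⟨hd, tl⟩
    · exact FreeGroup.reduce_singleton x
    · have h1 : NC x hd := (List.isChain_cons_cons.mp h).1
      have h2 : FreeGroup.reduce (hd :: tl) = hd :: tl := ih (List.isChain_cons_cons.mp h).2
      rw [FreeGroup.reduce.cons, h2]
      simp only [if_neg h1]

lemma chain'_flatten_replicate {W : List (α × Bool)} (hW : List.Chain' NC W)
    (hWW : List.Chain' NC (W ++ W)) (n : ℕ) :
    List.Chain' NC (List.replicate n W).flatten := by
  induction n with
  | zero => simp; exact List.isChain_nil
  | succ n ih =>
    rw [List.replicate_succ, List.flatten_cons]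
    refine List.isChain_append.mpr ?_
    refine ⟨hW, ih, ?_⟩
    intro a ha b hb
    rcases n with _ | n
    · simp at hb
    · rw [List.replicate_succ, List.flatten_cons] at hb
      have hWne : W ≠ [] := by
        rintro rfl; simp at hb
      rw [List.head?_append_of_ne_nil _ hWne] at hb
      exact (List.isChain_append.mp hWW).2.2 a ha b hb

lemma toWord_pow {w : FreeGroup α} (hwc : CyclicallyReduced w) (n : ℕ) :
    (w ^ n).toWord = (List.replicate n w.toWord).flatten := by
  have hred : FreeGroup.reduce w.toWord = w.toWord := FreeGroup.reduce_toWord w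
  have hredWW : FreeGroup.reduce (w.toWord ++ w.toWord) = w.toWord ++ w.toWord := by
    have h1 : FreeGroup.reduce (w.toWord ++ w.toWord) = (w * w).toWord := by
      conv_rhs => rw [← FreeGroup.mk_toWord (x := w)]
      rw [FreeGroup.mul_mk, FreeGroup.toWord_mk]
    rw [h1, hwc]
  have hch : List.Chain' NC (List.replicate n w.toWord).flatten :=
    chain'_flatten_replicate (chain'_of_reduce hred) (chain'_of_reduce hredWW) n
  conv_lhs => rw [← FreeGroup.mk_toWord (x := w)]
  rw [FreeGroup.pow_mk, FreeGroup.toWord_mk]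
  exact reduce_of_chain' hch

end Reduced

section Slices

variable {β : Type*}

lemma len_flatten_replicate (W : List β) (n : ℕ) :
    ((List.replicate n W).flatten).length = n * W.length := by
  induction n with
  | zero => simp
  | succ n ih => rw [List.replicate_succ, List.flatten_cons, List.length_append, ih]; ring

lemma slice_shift (W : List β) (n i t : ℕ) (h : i + W.length + t ≤ n * W.length) :
    (((List.replicate n W).flatten).drop (i + W.length)).take t
      = (((List.replicate n W).flatten).drop i).take t := by
  rcases eq_or_ne W.length 0 with hm | hm
  · rw [List.length_eq_zero_iff.mp hm]
    simp
  · have hm1 : 1 ≤ W.length := Nat.one_le_iff_ne_zero.mpr hm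
    rcases n with _ | n
    · omega
    have hnm : (n + 1) * W.length = n * W.length + W.length := by ring
    have hfront : (List.replicate (n + 1) W).flatten = W ++ (List.replicate n W).flatten := by
      rw [List.replicate_succ, List.flatten_cons]
    have hback : (List.replicate (n + 1) W).flatten = (List.replicate n W).flatten ++ W := by
      rw [List.replicate_succ', List.flatten_append]; simp
    have hlen' : ((List.replicate n W).flatten).length = n * W.length :=
      len_flatten_replicate W n
    have h1 : ((List.replicate (n + 1) W).flatten).drop (i + W.length)
        = ((List.replicate n W).flatten).drop i := by
      rw [hfront, add_comm i W.length, ← List.drop_length_add_append (l₁ := W)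
        (l₂ := (List.replicate n W).flatten) i]
    rw [h1]
    have hi : i ≤ n * W.length := by omega
    have h2 : ((List.replicate (n + 1) W).flatten).drop i
        = ((List.replicate n W).flatten).drop i ++ W := by
      rw [hback, List.drop_append_of_le_length (by omega)]
    rw [h2, List.take_append_of_le_length]
    rw [List.length_drop, hlen']
    omega

lemma slice_pow (W : List β) (n i : ℕ) : ∀ j : ℕ, i + j * W.length ≤ n * W.length →
    (((List.replicate n W).flatten).drop i).take (j * W.length)
      = (List.replicate j ((((List.replicate n W).flatten).drop i).take W.length)).flatten := by
  intro j
  induction j with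
  | zero => intro; simp
  | succ j ih =>
    intro h
    have hsucc : (j + 1) * W.length = W.length + j * W.length := by ring
    rw [hsucc, List.take_add, List.drop_drop, slice_shift W n i (j * W.length) (by omega),
      ih (by omega), List.replicate_succ, List.flatten_cons]

end Slices

section Count

variable {β : Type*}

lemma main_count (W A B : List β) (n : ℕ) (hW : W ≠ [])
    (k : ℕ) (zs : Fin k → List β)
    (hL : A ++ (List.replicate n W).flatten ++ B = (List.ofFn zs).flatten)
    (hzap : ∀ i, Aperiodic7 (zs i)) :
    n * W.length ≤ k * (7 * W.length - 1) := by
  set m := W.length with hm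
  have hm1 : 1 ≤ m := List.length_pos_iff.mpr hW
  set L : List β := (List.ofFn zs).flatten with hLdef
  set a := A.length with ha
  set Pn := (List.replicate n W).flatten with hPn
  have hPnlen : Pn.length = n * m := len_flatten_replicate W n
  have hLlen : L.length = a + n * m + B.length := by
    rw [← hL]; simp [hPnlen]; ring
  -- partial sums
  set s : ℕ → ℕ := fun j => (((List.ofFn zs).take j).flatten).length with hs
  have hs_succ : ∀ j (hj : j < k), s (j + 1) = s j + (zs ⟨j, hj⟩).length := by
    intro j hj
    have : (List.ofFn zs).take (j + 1) = (List.ofFn zs).take j ++ [zs ⟨j, by omega⟩] := by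
      rw [List.take_succ]
      congr 1
      rw [List.getElem?_eq_getElem (by simp [hj])]
      simp
    simp only [hs, this, List.flatten_append, List.length_append, List.flatten_cons,
      List.flatten_nil, List.append_nil]
  have hs_mono : Monotone s := by
    apply monotone_nat_of_le_succ
    intro j
    simp only [hs]
    rw [List.take_succ, List.flatten_append, List.length_append]
    exact Nat.le_add_right _ _
  have hs0 : s 0 = 0 := by simp [hs]
  have hsk : s k = L.length := by
    simp only [hs]
    rw [List.take_of_length_le (by simp)]
  -- the block decomposition
  have hdrop : ∀ j (hj : j < k), ∃ T, L.drop (s j) = zs ⟨j, hj⟩ ++ T := by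
    intro j hj
    refine ⟨((List.ofFn zs).drop (j+1)).flatten, ?_⟩
    have hsplit : L = ((List.ofFn zs).take j).flatten ++ ((List.ofFn zs).drop j).flatten := by
      rw [← List.flatten_append, List.take_append_drop]
    rw [hsplit]
    have h0 : s j = (((List.ofFn zs).take j).flatten).length + 0 := by simp [hs]
    rw [h0, List.drop_length_add_append, List.drop_zero]
    have : (List.ofFn zs).drop j = zs ⟨j, hj⟩ :: (List.ofFn zs).drop (j + 1) := by
      rw [List.drop_eq_getElem_cons (by simp [hj])]
      simp
    rw [this, List.flatten_cons]
  -- clamp function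
  set g : ℕ → ℕ := fun j => min (max (s j) a) (a + n * m) with hgdef
  have hg_mono : Monotone g := fun x y hxy => by
    simp only [hgdef]
    have := hs_mono hxy
    omega
  have hg0 : g 0 = a := by simp only [hgdef, hs0]; omega
  have hgk : g k = a + n * m := by
    simp only [hgdef, hsk]
    omega
  -- per-block bound
  have hkey : ∀ j, j < k → g (j + 1) - g j ≤ 7 * m - 1 := by
    intro j hj
    by_contra hcon
    have hzlen := hs_succ j hj
    set zw := zs ⟨j, hj⟩ with hzw
    have h7 : g j + 7 * m ≤ g (j + 1) := by omega
    have hgj1a : g (j + 1) ≤ a + n * m := min_le_right _ _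
    set p := max (s j) a with hp
    have hpa : a ≤ p := le_max_right _ _
    have hpsj : s j ≤ p := le_max_left _ _
    have hgj_eq : g j = p := by
      rcases le_total p (a + n * m) with h | h
      · exact min_eq_left h
      · exfalso
        have hh : g j = a + n * m := min_eq_right h
        omega
    have hreg : p + 7 * m ≤ a + n * m := by omega
    have hblock : p + 7 * m ≤ s (j + 1) := by
      have h1 : g (j + 1) ≤ max (s (j + 1)) a := min_le_left _ _
      rcases le_total (s (j + 1)) a with h | h
      · have hh : max (s (j + 1)) a = a := max_eq_right h
        omega
      · have hh : max (s (j + 1)) a = s (j + 1) := max_eq_left h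
        omega
    clear_value p
    clear hp
    obtain ⟨r, hr⟩ : ∃ r, p = a + r := ⟨p - a, by omega⟩
    obtain ⟨d, hd⟩ : ∃ d, p = s j + d := ⟨p - s j, by omega⟩
    have hreg' : a + r + 7 * m ≤ a + n * m := by rw [← hr]; exact hreg
    have hblock' : s j + d + 7 * m ≤ s (j + 1) := by rw [← hd]; exact hblock
    have hrm : r + 7 * m ≤ n * m := by
      have h := hreg'
      rw [add_assoc] at h
      exact le_of_add_le_add_left h
    have hdm : d + 7 * m ≤ zw.length := by
      have h := hblock'
      rw [hzlen, add_assoc] at h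
      exact le_of_add_le_add_left h
    -- the 7th power word
    set v := ((Pn.drop r).take m) with hv
    have hvne : v ≠ [] := by
      have hlen : v.length = min m (Pn.length - r) := by
        simp [hv, List.length_take, List.length_drop]
      have hvlen : v.length = m := by rw [hlen, hPnlen]; omega
      intro hnil
      rw [hnil] at hvlen
      simp at hvlen
      omega
    have hpow : (Pn.drop r).take (7 * m) = (List.replicate 7 v).flatten := by
      have := slice_pow W n r 7 (by rw [← hm]; omega)
      simpa [hv, hm] using this
    -- identify slice of L
    have hslice1 : (L.drop p).take (7 * m) = (Pn.drop r).take (7 * m) := by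
      have hLsplit : L = A ++ (Pn ++ B) := by rw [← hL, List.append_assoc]
      have hpar : p = A.length + r := by rw [hr, ha]
      rw [hLsplit, hpar, List.drop_length_add_append]
      rw [List.drop_append_of_le_length (by omega)]
      rw [List.take_append_of_le_length]
      rw [List.length_drop, hPnlen]
      omega
    -- slice inside the block
    obtain ⟨T, hT⟩ := hdrop j hj
    rw [← hzw] at hT
    have hslice2 : (L.drop p).take (7 * m) = ((zw.drop d).take (7 * m)) := by
      have h1 : L.drop p = (L.drop (s j)).drop d := by
        rw [List.drop_drop, ← hd]
      rw [h1, hT, List.drop_append_of_le_length (by omega)]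
      rw [List.take_append_of_le_length]
      rw [List.length_drop]
      omega
    have hinfix : (List.replicate 7 v).flatten <:+: zw := by
      rw [← hpow, ← hslice1, hslice2]
      exact ((List.take_prefix _ _).isInfix).trans ((List.drop_suffix _ _).isInfix)
    exact hzap _ ⟨v, hvne, hinfix⟩
  -- telescoping
  have hsum : ∑ j ∈ Finset.range k, (g (j + 1) - g j) = n * m := by
    rw [Finset.sum_range_tsub hg_mono, hgk, hg0]
    omega
  have hbound : ∑ j ∈ Finset.range k, (g (j + 1) - g j)
      ≤ ∑ _j ∈ Finset.range k, (7 * m - 1) := by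
    apply Finset.sum_le_sum
    intro j hj
    exact hkey j (Finset.mem_range.mp hj)
  rw [hsum] at hbound
  simpa using hbound

end Count

theorem stmt17 {α : Type*} [DecidableEq α] (w u : FreeGroup α) (n : ℕ)
    (hw : w ≠ 1) (hwc : CyclicallyReduced w) (hn : 1 ≤ n)
    (hg : (u * w ^ n * u⁻¹).toWord = u.toWord ++ (w ^ n).toWord ++ u⁻¹.toWord)
    (k : ℕ) (z : Fin k → FreeGroup α)
    (hz1 : ∀ i, z i ≠ 1)
    (hzap : ∀ i, Aperiodic7 (z i).toWord)
    (hprod : (List.ofFn z).prod = u * w ^ n * u⁻¹)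
    (hnc : (u * w ^ n * u⁻¹).toWord = (List.ofFn fun i => (z i).toWord).flatten) :
    n / 7 ≤ k := by
  have hWne : w.toWord ≠ [] := fun h => hw (FreeGroup.toWord_eq_nil_iff.mp h)
  have hm1 : 1 ≤ w.toWord.length := List.length_pos_iff.mpr hWne
  have hpow := toWord_pow hwc n
  have hL : u.toWord ++ (List.replicate n w.toWord).flatten ++ u⁻¹.toWord
      = (List.ofFn fun i => (z i).toWord).flatten := by
    rw [← hpow, ← hg, hnc]
  have hcount := main_count w.toWord u.toWord u⁻¹.toWord n hWne k
    (fun i => (z i).toWord) hL (fun i => hzap i)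
  set m := w.toWord.length
  have hk1 : 1 ≤ k := by
    by_contra hc
    have hk0 : k = 0 := by omega
    rw [hk0] at hcount
    simp at hcount
    have : 1 ≤ n * m := Nat.mul_le_mul hn hm1
    omega
  have h7 : n < 7 * k := by
    by_contra hc
    push_neg at hc
    have h1 : 7 * k * m ≤ n * m := Nat.mul_le_mul_right m hc
    have h3 : k * (7 * m - 1) + k = k * (7 * m) := by
      rw [← Nat.mul_succ]
      congr 1
      omega
    have h4 : k * (7 * m) = 7 * k * m := by ring
    linarith
  omega

end PurelyLoxGen
end
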